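/- Let A be an n×n matrix over a field F, let f = det(diag(x_1,…,x_n) + A) ∈ F[x_1,…,x_n], and let G = (diag(x_1,…,x_n) + A)^adj be the adjugate matrix (with polynomial entries). Then for every i ≠ j, Δ_ij(f) = G_ij · G_ji, where Δ_ij(f) = (∂f/∂x_i)(∂f/∂x_j) − f·(∂²f/∂x_i∂x_j). -/

import Mathlib

open MvPolynomial Matrix

section Aux

variable {n : ℕ} {F : Type*} [Field F]

/-- If all entries of a matrix have zero `i`-th partial derivative, so does its determinant. -/
lemma pderiv_det_eq_zero (i : Fin n) (N : Matrix (Fin n) (Fin n) (MvPolynomial (Fin n) F))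
    (h : ∀ k l, pderiv i (N k l) = 0) : pderiv i N.det = 0 := by
  set_option synthInstance.maxHeartbeats 1000000 in
  let S : Subring (MvPolynomial (Fin n) F) :=
    { carrier := {p | pderiv i p = 0}
      mul_mem' := fun {a b} ha hb => by
        simp only [Set.mem_setOf_eq] at *
        rw [pderiv_mul, ha, hb, mul_zero, zero_mul, add_zero]
      one_mem' := by simp only [Set.mem_setOf_eq, pderiv_one]
      add_mem' := fun {a b} ha hb => by
        simp only [Set.mem_setOf_eq] at *
        rw [map_add, ha, hb, add_zero]
      zero_mem' := by simp only [Set.mem_setOf_eq, map_zero]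
      neg_mem' := fun {a} ha => by
        simp only [Set.mem_setOf_eq] at *
        rw [map_neg, ha, neg_zero] }
  let N0 : Matrix (Fin n) (Fin n) S := fun k l => ⟨N k l, h k l⟩
  have hN : N = N0.map S.subtype := by ext k l; rfl
  have hdet : N.det = S.subtype N0.det := by
    rw [hN, ← RingHom.mapMatrix_apply, ← RingHom.map_det]
  rw [hdet]
  exact N0.det.2

/-- The key differentiation lemma. -/
lemma pderiv_det_eq (i : Fin n) (N : Matrix (Fin n) (Fin n) (MvPolynomial (Fin n) F))
    (h : ∀ k l, pderiv i (N k l) = if k = i ∧ l = i then 1 else 0) :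
    pderiv i N.det = (N.updateRow i (Pi.single i 1)).det := by
  classical
  set r : Fin n → MvPolynomial (Fin n) F :=
    fun l => N i l - X i * Pi.single (M := fun _ => MvPolynomial (Fin n) F) i 1 l with hr
  have hrow : N i = (X i : MvPolynomial (Fin n) F) • (Pi.single i 1 : Fin n → MvPolynomial (Fin n) F) + r := by
    funext l
    simp only [Pi.add_apply, Pi.smul_apply, smul_eq_mul, r]
    ring
  have hdet : N.det = X i * (N.updateRow i (Pi.single i 1)).det + (N.updateRow i r).det := by
    conv_lhs => rw [← Matrix.updateRow_eq_self N i, hrow]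
    rw [Matrix.det_updateRow_add, Matrix.det_updateRow_smul]
  have h1 : pderiv i (N.updateRow i (Pi.single i 1)).det = 0 := by
    apply pderiv_det_eq_zero
    intro k l
    by_cases hk : k = i
    · rw [hk, Matrix.updateRow_self]
      rcases eq_or_ne l i with h' | h' <;> simp [h', Pi.single_apply]
    · rw [Matrix.updateRow_ne hk, h]
      simp [hk]
  have h2 : pderiv i (N.updateRow i r).det = 0 := by
    apply pderiv_det_eq_zero
    intro k l
    by_cases hk : k = i
    · rw [hk, Matrix.updateRow_self]
      simp only [r, map_sub, h]
      rcases eq_or_ne l i with h' | h' <;>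
        simp [h', Pi.single_apply, pderiv_mul]
    · rw [Matrix.updateRow_ne hk, h]
      simp [hk]
  rw [hdet, map_add, pderiv_mul, pderiv_X_self, h1, h2, one_mul, mul_zero, add_zero, add_zero]

lemma updateRow_comm' {α : Type*} [DecidableEq (Fin n)] (M : Matrix (Fin n) (Fin n) α)
    {i j : Fin n} (hij : i ≠ j) (r s : Fin n → α) :
    (M.updateRow i r).updateRow j s = (M.updateRow j s).updateRow i r := by
  ext k l
  by_cases hkj : k = j
  · subst hkj
    rw [Matrix.updateRow_self, Matrix.updateRow_ne hij.symm, Matrix.updateRow_self]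
  · by_cases hki : k = i
    · subst hki
      rw [Matrix.updateRow_ne hkj, Matrix.updateRow_self, Matrix.updateRow_self]
    · rw [Matrix.updateRow_ne hkj, Matrix.updateRow_ne hki, Matrix.updateRow_ne hki,
        Matrix.updateRow_ne hkj]

lemma det_updateRow_expand (B : Matrix (Fin n) (Fin n) (MvPolynomial (Fin n) F)) (k : Fin n)
    (v : Fin n → MvPolynomial (Fin n) F) :
    (B.updateRow k v).det = ∑ l, v l * (B.updateRow k (Pi.single l 1)).det := by
  have hsum : ∀ (s : Finset (Fin n)) (g : Fin n → (Fin n → MvPolynomial (Fin n) F)),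
      (B.updateRow k (∑ l ∈ s, g l)).det = ∑ l ∈ s, (B.updateRow k (g l)).det := by
    intro s g
    induction s using Finset.cons_induction with
    | empty =>
        simp only [Finset.sum_empty]
        exact Matrix.det_eq_zero_of_row_eq_zero k (fun l => by simp)
    | cons a s ha ih =>
        rw [Finset.sum_cons, Finset.sum_cons, Matrix.det_updateRow_add, ih]
  have hv : v = ∑ l, (v l) • Pi.single (M := fun _ => MvPolynomial (Fin n) F) l 1 := by
    funext m
    simp [Pi.single_apply]
  conv_lhs => rw [hv]
  rw [hsum]
  exact Finset.sum_congr rfl fun l _ => by rw [Matrix.det_updateRow_smul]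

end Aux
section Main

variable {n : ℕ} {F : Type*} [Field F]

lemma det_updateRow_single_one (i m : Fin n) :
    ((1 : Matrix (Fin n) (Fin n) (MvPolynomial (Fin n) F)).updateRow i (Pi.single m 1)).det
      = if m = i then 1 else 0 := by
  rcases eq_or_ne m i with h | h
  · subst h
    rw [if_pos rfl]
    have : Pi.single m (1 : MvPolynomial (Fin n) F) = (1 : Matrix (Fin n) (Fin n) _) m := by
      funext l
      simp [Matrix.one_apply, Pi.single_apply, eq_comm]
    rw [this, Matrix.updateRow_eq_self, Matrix.det_one]
  · rw [if_neg h]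
    apply Matrix.det_zero_of_row_eq h.symm
    rw [Matrix.updateRow_self, Matrix.updateRow_ne h]
    funext l
    simp [Matrix.one_apply, Pi.single_apply, eq_comm]

lemma one_row_eq (k : Fin n) :
    (1 : Matrix (Fin n) (Fin n) (MvPolynomial (Fin n) F)) k = Pi.single k 1 := by
  funext l
  simp [Matrix.one_apply, Pi.single_apply, eq_comm]

lemma detV {i j : Fin n} (hij : i ≠ j) (r s : Fin n → MvPolynomial (Fin n) F) :
    (((1 : Matrix (Fin n) (Fin n) (MvPolynomial (Fin n) F)).updateRow i r).updateRow j s).det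
      = s j * r i - s i * r j := by
  classical
  have hc : ∀ m : Fin n,
      (((1 : Matrix (Fin n) (Fin n) (MvPolynomial (Fin n) F)).updateRow j
        (Pi.single i 1)).updateRow i (Pi.single m 1)).det
        = if m = j then -1 else 0 := by
    intro m
    rcases eq_or_ne m j with h | hmj
    · rw [h, if_pos rfl]
      have hQ : ((1 : Matrix (Fin n) (Fin n) (MvPolynomial (Fin n) F)).updateRow j
          (Pi.single i 1)).updateRow i (Pi.single j 1)
          = (1 : Matrix (Fin n) (Fin n) (MvPolynomial (Fin n) F)).submatrix
              (Equiv.swap i j) id := by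
        ext k t
        rcases eq_or_ne k i with hki | hki
        · rw [hki, Matrix.updateRow_self, Matrix.submatrix_apply, Equiv.swap_apply_left, id,
            one_row_eq]
        · rw [Matrix.updateRow_ne hki]
          rcases eq_or_ne k j with hkj | hkj
          · rw [hkj, Matrix.updateRow_self, Matrix.submatrix_apply, Equiv.swap_apply_right, id,
              one_row_eq]
          · rw [Matrix.updateRow_ne hkj, Matrix.submatrix_apply,
              Equiv.swap_apply_of_ne_of_ne hki hkj, id]
      rw [hQ, Matrix.det_permute, Matrix.det_one, Equiv.Perm.sign_swap hij]
      simp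
    · rw [if_neg hmj]
      rcases eq_or_ne m i with hmi | hmi
      · -- rows i and j both equal Pi.single i 1
        apply Matrix.det_zero_of_row_eq hij
        rw [hmi, Matrix.updateRow_self, Matrix.updateRow_ne hij.symm, Matrix.updateRow_self]
      · -- rows i and m both equal Pi.single m 1
        apply Matrix.det_zero_of_row_eq hmi.symm
        rw [Matrix.updateRow_self, Matrix.updateRow_ne hmi, Matrix.updateRow_ne hmj, one_row_eq]
  have hd : ∀ l : Fin n,
      (((1 : Matrix (Fin n) (Fin n) (MvPolynomial (Fin n) F)).updateRow i r).updateRow j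
        (Pi.single l 1)).det = if l = j then r i else if l = i then -(r j) else 0 := by
    intro l
    rcases eq_or_ne l j with h | hlj
    · rw [h, if_pos rfl, updateRow_comm' _ hij, ← one_row_eq j, Matrix.updateRow_eq_self,
        det_updateRow_expand]
      simp only [det_updateRow_single_one, mul_ite, mul_one, mul_zero]
      rw [Finset.sum_ite_eq' Finset.univ i r]
      simp
    · rw [if_neg hlj]
      rcases eq_or_ne l i with h | hli
      · rw [h, if_pos rfl, updateRow_comm' _ hij, det_updateRow_expand]
        simp only [hc, mul_ite, mul_neg_one, mul_zero]
        rw [Finset.sum_ite_eq' Finset.univ j (fun m => -(r m))]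
        simp
      · rw [if_neg hli]
        apply Matrix.det_zero_of_row_eq (show j ≠ l from fun h => hlj h.symm)
        rw [Matrix.updateRow_self, Matrix.updateRow_ne hlj, Matrix.updateRow_ne hli, one_row_eq]
  rw [det_updateRow_expand]
  simp only [hd]
  have hsplit : ∀ l : Fin n, s l * (if l = j then r i else if l = i then -(r j) else 0)
      = (if l = j then s j * r i else 0) + (if l = i then -(s i * r j) else 0) := by
    intro l
    rcases eq_or_ne l j with h | hlj
    · rw [h, if_pos rfl, if_pos rfl, if_neg hij.symm]
      ring
    · rw [if_neg hlj, if_neg hlj]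
      rcases eq_or_ne l i with h | hli
      · rw [h, if_pos rfl, if_pos rfl]
        ring
      · simp [hli, hlj]
  simp only [hsplit]
  rw [Finset.sum_add_distrib, Finset.sum_ite_eq' Finset.univ j, Finset.sum_ite_eq' Finset.univ i]
  simp
  ring

end Main
section Main2

variable {n : ℕ} {F : Type*} [Field F]

lemma entry_cond (A : Matrix (Fin n) (Fin n) F) (i : Fin n) (k l : Fin n) :
    pderiv i ((Matrix.diagonal (fun k => X k) + A.map C
        : Matrix (Fin n) (Fin n) (MvPolynomial (Fin n) F)) k l)
      = if k = i ∧ l = i then 1 else 0 := by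
  classical
  simp only [Matrix.add_apply, Matrix.map_apply, map_add, pderiv_C, add_zero,
    Matrix.diagonal_apply]
  rcases eq_or_ne k l with h | h
  · rw [if_pos h]
    rcases eq_or_ne k i with h' | h'
    · rw [h'] at h ⊢
      rw [pderiv_X_self, if_pos ⟨rfl, h.symm⟩]
    · rw [pderiv_X_of_ne h', if_neg (fun hh => h' hh.1)]
  · rw [if_neg h, map_zero, if_neg (fun hh => h (hh.1.trans hh.2.symm))]

lemma entry_cond' (A : Matrix (Fin n) (Fin n) F) {i j : Fin n} (hij : i ≠ j) (k l : Fin n) :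
    pderiv i (((Matrix.diagonal (fun k => X k) + A.map C
        : Matrix (Fin n) (Fin n) (MvPolynomial (Fin n) F)).updateRow j (Pi.single j 1)) k l)
      = if k = i ∧ l = i then 1 else 0 := by
  classical
  rcases eq_or_ne k j with h | h
  · rw [h, Matrix.updateRow_self, if_neg (fun hh : j = i ∧ l = i => hij hh.1.symm)]
    · rcases eq_or_ne l j with h' | h'
      · rw [h', Pi.single_eq_same, pderiv_one]
      · rw [Pi.single_eq_of_ne h', map_zero]
  · rw [Matrix.updateRow_ne h, entry_cond]

/-- The determinantal polynomial is nonzero. -/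
lemma detM_ne_zero (A : Matrix (Fin n) (Fin n) F) :
    (Matrix.diagonal (fun k => X k) + A.map C).det ≠ 0 := by
  classical
  intro hf
  set φ : MvPolynomial (Fin n) F →+* Polynomial F :=
    (aeval (fun _ : Fin n => (Polynomial.X : Polynomial F))).toRingHom with hφ
  have hmap : (Matrix.diagonal (fun k => X k) + A.map C).map φ = charmatrix (-A) := by
    ext k l
    rcases eq_or_ne k l with h | h
    · rw [h, Matrix.map_apply, Matrix.add_apply, Matrix.diagonal_apply_eq, Matrix.map_apply,
        charmatrix_apply_eq, Matrix.neg_apply, map_neg, sub_neg_eq_add, map_add]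
      simp [φ]
    · rw [Matrix.map_apply, Matrix.add_apply, Matrix.diagonal_apply_ne _ h, Matrix.map_apply,
        charmatrix_apply_ne _ _ _ h, Matrix.neg_apply, map_neg, neg_neg, zero_add]
      simp [φ]
  have h1 : φ (Matrix.diagonal (fun k => X k) + A.map C).det = (-A).charpoly := by
    rw [RingHom.map_det, RingHom.mapMatrix_apply, hmap]
    rfl
  rw [hf, map_zero] at h1
  exact (Matrix.charpoly_monic (-A)).ne_zero h1.symm

end Main2
section Main3

variable {n : ℕ} {F : Type*} [Field F]

noncomputable def Mmat (A : Matrix (Fin n) (Fin n) F) :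
    Matrix (Fin n) (Fin n) (MvPolynomial (Fin n) F) :=
  Matrix.diagonal (fun k => X k) + A.map C

lemma jacobi (A : Matrix (Fin n) (Fin n) F) {i j : Fin n} (hij : i ≠ j) :
    (Mmat A).adjugate i i * (Mmat A).adjugate j j
      - (Mmat A).adjugate i j * (Mmat A).adjugate j i
      = (Mmat A).det *
        (((Mmat A).updateRow j (Pi.single j 1)).updateRow i (Pi.single i 1)).det := by
  classical
  set M := Mmat A with hM
  set V : Matrix (Fin n) (Fin n) (MvPolynomial (Fin n) F) :=
    ((1 : Matrix (Fin n) (Fin n) (MvPolynomial (Fin n) F)).updateRow i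
      (fun l => M.adjugate i l)).updateRow j (fun l => M.adjugate j l) with hV
  have hVM : V * M = (M.updateRow i
      (M.det • (Pi.single i 1 : Fin n → MvPolynomial (Fin n) F))).updateRow j
      (M.det • (Pi.single j 1 : Fin n → MvPolynomial (Fin n) F)) := by
    ext k l
    rcases eq_or_ne k j with h | h
    · rw [h, Matrix.updateRow_self, Matrix.mul_apply]
      have hVj : ∀ m, V j m = M.adjugate j m := fun m => by
        rw [hV, Matrix.updateRow_self]
      rw [Finset.sum_congr rfl (fun m _ => by rw [hVj m]), ← Matrix.mul_apply,
        Matrix.adjugate_mul]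
      simp [Matrix.one_apply, Pi.single_apply, eq_comm]
    · rw [Matrix.updateRow_ne h]
      rcases eq_or_ne k i with h' | h'
      · rw [h', Matrix.updateRow_self, Matrix.mul_apply]
        have hVi : ∀ m, V i m = M.adjugate i m := fun m => by
          rw [hV, Matrix.updateRow_ne hij, Matrix.updateRow_self]
        rw [Finset.sum_congr rfl (fun m _ => by rw [hVi m]), ← Matrix.mul_apply,
          Matrix.adjugate_mul]
        simp [Matrix.one_apply, Pi.single_apply, eq_comm]
      · rw [Matrix.updateRow_ne h', Matrix.mul_apply]
        have hVk : ∀ m, V k m = (1 : Matrix (Fin n) (Fin n) (MvPolynomial (Fin n) F)) k m :=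
          fun m => by rw [hV, Matrix.updateRow_ne h, Matrix.updateRow_ne h']
        rw [Finset.sum_congr rfl (fun m _ => by rw [hVk m]), ← Matrix.mul_apply,
          Matrix.one_mul]
  have hdetV : V.det = M.adjugate j j * M.adjugate i i - M.adjugate j i * M.adjugate i j := by
    rw [hV, detV hij]
  have hdetVM : V.det * M.det = M.det * (M.det *
      ((M.updateRow j (Pi.single j 1)).updateRow i (Pi.single i 1)).det) := by
    rw [← Matrix.det_mul, hVM, Matrix.det_updateRow_smul, updateRow_comm' _ hij,
      Matrix.det_updateRow_smul]
  have hcancel : V.det = M.det *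
      ((M.updateRow j (Pi.single j 1)).updateRow i (Pi.single i 1)).det := by
    have hne : M.det ≠ 0 := detM_ne_zero A
    apply mul_left_cancel₀ hne
    rw [mul_comm M.det V.det]
    exact hdetVM
  rw [← hcancel, hdetV]
  ring

end Main3

/-- The Rayleigh difference of `f` with respect to variables `i` and `j`. -/
noncomputable def rayleighDiff {n : ℕ} {F : Type*} [Field F]
    (i j : Fin n) (f : MvPolynomial (Fin n) F) : MvPolynomial (Fin n) F :=
  pderiv i f * pderiv j f - f * pderiv i (pderiv j f)

theorem rayleighDiff_det_eq_adjugate_mul {n : ℕ} {F : Type*} [Field F]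
    (A : Matrix (Fin n) (Fin n) F) (i j : Fin n) (hij : i ≠ j) :
    let M : Matrix (Fin n) (Fin n) (MvPolynomial (Fin n) F) :=
      Matrix.diagonal (fun k => X k) + A.map C
    rayleighDiff i j M.det = M.adjugate i j * M.adjugate j i := by
  intro M
  have h1 : pderiv i M.det = M.adjugate i i := by
    rw [Matrix.adjugate_apply]
    exact pderiv_det_eq i M (entry_cond A i)
  have h2 : pderiv j M.det = M.adjugate j j := by
    rw [Matrix.adjugate_apply]
    exact pderiv_det_eq j M (entry_cond A j)
  have h3 : pderiv i (pderiv j M.det)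
      = ((M.updateRow j (Pi.single j 1)).updateRow i (Pi.single i 1)).det := by
    rw [pderiv_det_eq j M (entry_cond A j)]
    exact pderiv_det_eq i _ (entry_cond' A hij)
  have hJ : M.adjugate i i * M.adjugate j j - M.adjugate i j * M.adjugate j i
      = M.det * ((M.updateRow j (Pi.single j 1)).updateRow i (Pi.single i 1)).det :=
    jacobi A hij
  rw [rayleighDiff, h3, h1, h2]
  linear_combination hJ
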